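/- For every λ > 0 with λ ≠ 1, the Laplace transform of the distributed-order kernel k(t) = ∫₀^1 t^{α-1}/Γ(α) dα satisfies K(λ) = ∫₀^∞ e^{-λt} (∫₀^1 t^{α-1}/Γ(α) dα) dt = (λ - 1)/(λ log λ). -/
import Mathlib

open MeasureTheory Set Real

/-- Integrability of `t ^ (a-1) * exp (-(r*t))` on `(0, ∞)`. -/
lemma aux_integrableOn_rpow_mul_exp {a r : ℝ} (ha : 0 < a) (hr : 0 < r) :
    IntegrableOn (fun t : ℝ => t ^ (a - 1) * Real.exp (-(r * t))) (Set.Ioi 0) := by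
  have h := Real.GammaIntegral_convergent ha
  have h2 : IntegrableOn (fun x : ℝ => Real.exp (-(r * x)) * (r * x) ^ (a - 1)) (Set.Ioi 0) := by
    have := (MeasureTheory.integrableOn_Ioi_comp_mul_left_iff
      (fun x : ℝ => Real.exp (-x) * x ^ (a - 1)) 0 hr).mpr
    simpa [mul_zero] using this (by simpa using h)
  have h3 := h2.const_mul (r ^ ((1 : ℝ) - a))
  refine MeasureTheory.IntegrableOn.congr_fun h3 (fun t ht => ?_) measurableSet_Ioi
  have ht' : (0 : ℝ) < t := ht
  rw [Real.mul_rpow hr.le ht'.le]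
  rw [show r ^ ((1:ℝ) - a) * (Real.exp (-(r*t)) * (r ^ (a-1) * t ^ (a-1)))
      = (r ^ ((1:ℝ) - a) * r ^ (a-1)) * (t ^ (a-1) * Real.exp (-(r*t))) by ring,
    ← Real.rpow_add hr]
  norm_num

/-- **Laplace transform of the distributed-order kernel.**
For every `λ > 0` with `λ ≠ 1`,
`∫₀^∞ e^{-λt} (∫₀^1 t^{α-1}/Γ(α) dα) dt = (λ - 1)/(λ log λ)`. -/
theorem laplace_transform_distributed_order_kernel
    (lam : ℝ) (hlam : 0 < lam) (hne : lam ≠ 1) :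
    ∫ t in Set.Ioi (0 : ℝ),
        Real.exp (-(lam * t)) * ∫ α in Set.Ioo (0 : ℝ) 1, t ^ (α - 1) / Real.Gamma α
      = (lam - 1) / (lam * Real.log lam) := by
  have hc : Real.log lam ≠ 0 := by
    intro h
    rcases (Real.log_eq_zero).mp h with h1 | h1 | h1 <;> [exact hlam.ne' h1; exact hne h1;
      linarith]
  set F : ℝ × ℝ → ℝ := fun p => Real.exp (-(lam * p.1)) * (p.1 ^ (p.2 - 1) / Real.Gamma p.2)
    with hF
  -- measurability on the product
  have hmeas : AEStronglyMeasurable F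
      ((volume.restrict (Ioi 0)).prod (volume.restrict (Ioo 0 1))) := by
    rw [Measure.prod_restrict]
    refine ContinuousOn.aestronglyMeasurable ?_ (measurableSet_Ioi.prod measurableSet_Ioo)
    intro p hp
    obtain ⟨hp1, hp2⟩ := hp
    have hΓ : ContinuousAt (fun q : ℝ × ℝ => Real.Gamma q.2) p :=
      (Real.differentiableAt_Gamma (fun m h => by
        rw [h] at hp2
        exact absurd hp2.1 (not_lt.mpr (neg_nonpos.mpr (Nat.cast_nonneg m))))).continuousAt.comp
        continuousAt_snd
    have hrpow : ContinuousAt (fun q : ℝ × ℝ => q.1 ^ (q.2 - 1)) p :=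
      ContinuousAt.rpow continuousAt_fst (continuousAt_snd.sub continuousAt_const)
        (Or.inl (ne_of_gt hp1))
    have hexp : ContinuousAt (fun q : ℝ × ℝ => Real.exp (-(lam * q.1))) p := by
      exact (Real.continuous_exp.continuousAt).comp
        ((continuousAt_const.mul continuousAt_fst).neg)
    have hΓne : Real.Gamma p.2 ≠ 0 := (Real.Gamma_pos_of_pos hp2.1).ne'
    exact (hexp.mul (hrpow.div hΓ hΓne)).continuousWithinAt
  -- integrability in `t` for each fixed `α`
  have hInt : ∀ α ∈ Ioo (0:ℝ) 1, IntegrableOn (fun t => F (t, α)) (Ioi 0) := by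
    intro α hα
    have h := (aux_integrableOn_rpow_mul_exp hα.1 hlam).mul_const (Real.Gamma α)⁻¹
    refine MeasureTheory.IntegrableOn.congr_fun h (fun t _ => ?_) measurableSet_Ioi
    simp only [hF, div_eq_mul_inv]; ring
  -- value of the inner `t`-integral
  have hval : ∀ α ∈ Ioo (0:ℝ) 1, (∫ t in Ioi (0:ℝ), F (t, α)) = ((1:ℝ)/lam) ^ α := by
    intro α hα
    have h1 : (∫ t in Ioi (0:ℝ), F (t, α))
        = (∫ t in Ioi (0:ℝ), t ^ (α - 1) * Real.exp (-(lam * t))) * (Real.Gamma α)⁻¹ := by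
      rw [← integral_mul_const]
      refine setIntegral_congr_fun measurableSet_Ioi (fun t _ => ?_)
      simp only [hF, div_eq_mul_inv]; ring
    rw [h1, Real.integral_rpow_mul_exp_neg_mul_Ioi hα.1 hlam, mul_assoc,
      mul_inv_cancel₀ (Real.Gamma_pos_of_pos hα.1).ne', mul_one]
  -- continuity/integrability of `α ↦ (1/lam)^α` on `(0,1)`
  have hcont : Continuous fun α : ℝ => ((1:ℝ)/lam) ^ α := by
    have : (fun α : ℝ => ((1:ℝ)/lam) ^ α) = fun α => Real.exp (Real.log (1/lam) * α) := by
      funext α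
      rw [Real.rpow_def_of_pos (by positivity)]
    rw [this]
    exact Real.continuous_exp.comp (continuous_const.mul continuous_id)
  have hIntPow : IntegrableOn (fun α : ℝ => ((1:ℝ)/lam) ^ α) (Ioo 0 1) :=
    (hcont.integrableOn_Icc (a := 0) (b := 1)).mono_set Ioo_subset_Icc_self
  -- integrability of the norm integral in `α`
  have hnorm : Integrable (fun α => ∫ t in Ioi (0:ℝ), ‖F (t, α)‖)
      (volume.restrict (Ioo 0 1)) := by
    refine hIntPow.congr ?_
    rw [Filter.EventuallyEq, ae_restrict_iff' measurableSet_Ioo]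
    refine Filter.Eventually.of_forall (fun α hα => ?_)
    rw [← hval α hα]
    refine setIntegral_congr_fun measurableSet_Ioi (fun t ht => ?_)
    have ht' : (0:ℝ) < t := ht
    rw [Real.norm_eq_abs, abs_of_nonneg]
    have := Real.Gamma_pos_of_pos hα.1
    positivity
  -- integrability on the product
  have hprod : Integrable F ((volume.restrict (Ioi 0)).prod (volume.restrict (Ioo 0 1))) := by
    rw [MeasureTheory.integrable_prod_iff' hmeas]
    constructor
    · rw [ae_restrict_iff' measurableSet_Ioo]
      exact Filter.Eventually.of_forall (fun α hα => hInt α hα)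
    · exact hnorm
  -- rewrite the LHS as an iterated integral of F, then swap
  have hswap : (∫ t in Ioi (0:ℝ), ∫ α in Ioo (0:ℝ) 1, F (t, α))
      = ∫ α in Ioo (0:ℝ) 1, ∫ t in Ioi (0:ℝ), F (t, α) :=
    MeasureTheory.integral_integral_swap hprod
  have hLHS : (∫ t in Set.Ioi (0 : ℝ),
        Real.exp (-(lam * t)) * ∫ α in Set.Ioo (0 : ℝ) 1, t ^ (α - 1) / Real.Gamma α)
      = ∫ t in Ioi (0:ℝ), ∫ α in Ioo (0:ℝ) 1, F (t, α) := by
    refine setIntegral_congr_fun measurableSet_Ioi (fun t _ => ?_)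
    rw [← integral_const_mul]
  rw [hLHS, hswap]
  have hRHS : (∫ α in Ioo (0:ℝ) 1, ∫ t in Ioi (0:ℝ), F (t, α))
      = ∫ α in Ioo (0:ℝ) 1, ((1:ℝ)/lam) ^ α :=
    setIntegral_congr_fun measurableSet_Ioo (fun α hα => hval α hα)
  rw [hRHS]
  -- compute the final integral
  have h1 : (∫ α in Ioo (0:ℝ) 1, ((1:ℝ)/lam) ^ α)
      = ∫ α in (0:ℝ)..1, Real.exp (-Real.log lam * α) := by
    rw [← MeasureTheory.integral_Ioc_eq_integral_Ioo,
      ← intervalIntegral.integral_of_le (by norm_num)]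
    refine intervalIntegral.integral_congr (fun α _ => ?_)
    rw [Real.rpow_def_of_pos (by positivity), Real.log_div one_ne_zero hlam.ne',
      Real.log_one, zero_sub]
  rw [h1]
  have h2 : (∫ α in (0:ℝ)..1, Real.exp (-Real.log lam * α))
      = (Real.exp (-Real.log lam) - 1) / (-Real.log lam) := by
    rw [intervalIntegral.integral_comp_mul_left (fun x => Real.exp x) (neg_ne_zero.mpr hc)]
    simp [integral_exp, div_eq_inv_mul]
  rw [h2, Real.exp_neg, Real.exp_log hlam]
  field_simp
  ring
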